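/- For every positive integer n and every divisor d of n, the number of rectangles (π, τ) on an n-element set whose height is d equals n! / (d! · (n/d)!). -/
import Mathlib

open Finset

/-- A rectangle on the finite set `Fin n`: a pair of set partitions such that
every block of the first meets every block of the second in exactly one element. -/
def IsRectangle {n : ℕ} (π τ : Finpartition (Finset.univ : Finset (Fin n))) : Prop :=
  ∀ B ∈ π.parts, ∀ C ∈ τ.parts, (B ∩ C).card = 1

namespace RectAux

variable {n d e : ℕ}

/-- the `i`-th row of a grid bijection. -/
def row (f : Fin d × Fin e ≃ Fin n) (i : Fin d) : Finset (Fin n) :=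
  Finset.univ.image fun j => f (i, j)

lemma mem_row {f : Fin d × Fin e ≃ Fin n} {i : Fin d} {x : Fin n} :
    x ∈ row f i ↔ ∃ j, f (i, j) = x := by simp [row]

/-- swap rows and columns. -/
def swap (f : Fin d × Fin e ≃ Fin n) : Fin e × Fin d ≃ Fin n :=
  (Equiv.prodComm _ _).trans f

lemma swap_apply (f : Fin d × Fin e ≃ Fin n) (j : Fin e) (i : Fin d) :
    swap f (j, i) = f (i, j) := rfl

lemma row_disjoint (f : Fin d × Fin e ≃ Fin n) {i i' : Fin d} (h : i ≠ i') :
    Disjoint (row f i) (row f i') := by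
  rw [Finset.disjoint_left]
  rintro x hx hx'
  obtain ⟨j, hj⟩ := mem_row.1 hx
  obtain ⟨j', hj'⟩ := mem_row.1 hx'
  exact h (congrArg Prod.fst (f.injective (hj.trans hj'.symm)))

lemma row_injective (f : Fin d × Fin e ≃ Fin n) (he : 0 < e) :
    Function.Injective (row f) := by
  intro i i' h
  by_contra hne
  have hx : f (i, ⟨0, he⟩) ∈ row f i := mem_row.2 ⟨_, rfl⟩
  exact (Finset.disjoint_left.1 (row_disjoint f hne) hx) (h ▸ hx)

/-- The partition of `Fin n` into the rows of a grid bijection. -/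
def rowPartition (f : Fin d × Fin e ≃ Fin n) (he : 0 < e) :
    Finpartition (Finset.univ : Finset (Fin n)) where
  parts := Finset.univ.image (row f)
  supIndep := by
    rw [Finset.supIndep_iff_pairwiseDisjoint]
    rintro a ha b hb hab
    simp only [coe_image, Set.mem_image, mem_coe] at ha hb
    obtain ⟨i, -, rfl⟩ := ha
    obtain ⟨i', -, rfl⟩ := hb
    exact row_disjoint f (fun h => hab (h ▸ rfl))
  sup_parts := by
    apply Finset.Subset.antisymm (Finset.subset_univ _)
    intro x _
    rw [Finset.mem_sup]
    refine ⟨row f (f.symm x).1, Finset.mem_image_of_mem _ (Finset.mem_univ _), ?_⟩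
    exact mem_row.2 ⟨(f.symm x).2, by simp⟩
  bot_notMem := by
    simp only [bot_eq_empty, Finset.mem_image, Finset.mem_univ, true_and]
    rintro ⟨i, hi⟩
    have : f (i, ⟨0, he⟩) ∈ row f i := mem_row.2 ⟨_, rfl⟩
    rw [hi] at this
    exact absurd this (Finset.notMem_empty _)

lemma mem_rowPartition_parts (f : Fin d × Fin e ≃ Fin n) (he : 0 < e)
    {B : Finset (Fin n)} : B ∈ (rowPartition f he).parts ↔ ∃ i, row f i = B := by
  simp [rowPartition]

lemma rowPartition_parts_card (f : Fin d × Fin e ≃ Fin n) (he : 0 < e) :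
    (rowPartition f he).parts.card = d := by
  rw [rowPartition]
  simp [Finset.card_image_of_injective _ (row_injective f he)]

lemma row_card (f : Fin d × Fin e ≃ Fin n) (i : Fin d) : (row f i).card = e := by
  rw [row, Finset.card_image_of_injective _
    (fun j j' hjj => (Prod.ext_iff.1 (f.injective hjj)).2),
    Finset.card_univ, Fintype.card_fin]

lemma row_inter_row_swap (f : Fin d × Fin e ≃ Fin n) (i : Fin d) (j : Fin e) :
    row f i ∩ row (swap f) j = {f (i, j)} := by
  ext x
  simp only [Finset.mem_inter, mem_row, Finset.mem_singleton]
  constructor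
  · rintro ⟨⟨j', hj'⟩, ⟨i', hi'⟩⟩
    rw [swap_apply] at hi'
    have h2 := f.injective (hj'.trans hi'.symm)
    injection h2 with ha hb
    subst ha; subst hb
    exact hj'.symm
  · rintro rfl
    exact ⟨⟨j, rfl⟩, ⟨i, rfl⟩⟩

variable (n d) in
/-- The type of rectangles of height `d` on `Fin n`. -/
abbrev Rect : Type :=
  {p : Finpartition (Finset.univ : Finset (Fin n)) ×
      Finpartition (Finset.univ : Finset (Fin n)) //
      IsRectangle p.1 p.2 ∧ p.1.parts.card = d}

/-- The rectangle associated to a grid bijection. -/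
def toRect (hd : 0 < d) (he : 0 < e) (f : Fin d × Fin e ≃ Fin n) : Rect n d :=
  ⟨(rowPartition f he, rowPartition (swap f) hd), by
    constructor
    · intro B hB C hC
      obtain ⟨i, rfl⟩ := (mem_rowPartition_parts f he).1 hB
      obtain ⟨j, rfl⟩ := (mem_rowPartition_parts (swap f) hd).1 hC
      rw [row_inter_row_swap]
      exact Finset.card_singleton _
    · exact rowPartition_parts_card f he⟩

/-- Composing with a pair of permutations does not change the rectangle. -/
lemma toRect_comp (hd : 0 < d) (he : 0 < e) (f : Fin d × Fin e ≃ Fin n)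
    (σ : Equiv.Perm (Fin d)) (ρ : Equiv.Perm (Fin e)) :
    toRect hd he ((σ.prodCongr ρ).trans f) = toRect hd he f := by
  have hrow : ∀ i, row ((σ.prodCongr ρ).trans f) i = row f (σ i) := by
    intro i
    ext x
    simp only [mem_row, Equiv.trans_apply, Equiv.prodCongr_apply, Prod.map]
    exact ⟨fun ⟨j, hj⟩ => ⟨ρ j, hj⟩, fun ⟨j, hj⟩ => ⟨ρ.symm j, by simpa using hj⟩⟩
  have hswap : swap ((σ.prodCongr ρ).trans f) = (ρ.prodCongr σ).trans (swap f) := by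
    ext ⟨j, i⟩; rfl
  have hcol : ∀ j, row (swap ((σ.prodCongr ρ).trans f)) j = row (swap f) (ρ j) := by
    intro j
    rw [hswap]
    ext x
    simp only [mem_row, Equiv.trans_apply, Equiv.prodCongr_apply, Prod.map]
    exact ⟨fun ⟨i, hi⟩ => ⟨σ i, hi⟩, fun ⟨i, hi⟩ => ⟨σ.symm i, by simpa using hi⟩⟩
  apply Subtype.ext
  apply Prod.ext
  · apply Finpartition.ext
    ext B
    simp only [toRect]
    rw [mem_rowPartition_parts _ he, mem_rowPartition_parts _ he]
    constructor
    · rintro ⟨i, rfl⟩; exact ⟨σ i, (hrow i).symm⟩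
    · rintro ⟨i, rfl⟩; exact ⟨σ.symm i, by rw [hrow]; simp⟩
  · apply Finpartition.ext
    ext C
    simp only [toRect]
    rw [mem_rowPartition_parts _ hd, mem_rowPartition_parts _ hd]
    constructor
    · rintro ⟨j, rfl⟩; exact ⟨ρ j, (hcol j).symm⟩
    · rintro ⟨j, rfl⟩; exact ⟨ρ.symm j, by rw [hcol]; simp⟩

/-- If two grid bijections give the same rectangle, they differ by permutations. -/
lemma exists_perm_of_toRect_eq (hd : 0 < d) (he : 0 < e)
    {f g : Fin d × Fin e ≃ Fin n} (h : toRect hd he f = toRect hd he g) :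
    ∃ (σ : Equiv.Perm (Fin d)) (ρ : Equiv.Perm (Fin e)),
      g = (σ.prodCongr ρ).trans f := by
  have h1 : (rowPartition g he).parts = (rowPartition f he).parts := by
    rw [show rowPartition f he = (toRect hd he f).1.1 from rfl, h]; rfl
  have h2 : (rowPartition (swap g) hd).parts = (rowPartition (swap f) hd).parts := by
    rw [show rowPartition (swap f) hd = (toRect hd he f).1.2 from rfl, h]; rfl
  -- build σ
  have hσ : ∀ i : Fin d, ∃ i', row f i' = row g i := by
    intro i
    exact (mem_rowPartition_parts f he).1 (h1 ▸ (mem_rowPartition_parts g he).2 ⟨i, rfl⟩)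
  choose σ0 hσ0 using hσ
  have hσinj : Function.Injective σ0 := by
    intro i i' hii
    exact row_injective g he ((hσ0 i).symm.trans (hii ▸ hσ0 i'))
  have hρ : ∀ j : Fin e, ∃ j', row (swap f) j' = row (swap g) j := by
    intro j
    exact (mem_rowPartition_parts (swap f) hd).1 (h2 ▸ (mem_rowPartition_parts (swap g) hd).2 ⟨j, rfl⟩)
  choose ρ0 hρ0 using hρ
  have hρinj : Function.Injective ρ0 := by
    intro j j' hjj
    exact row_injective (swap g) hd ((hρ0 j).symm.trans (hjj ▸ hρ0 j'))
  refine ⟨Equiv.ofBijective σ0 (Finite.injective_iff_bijective.1 hσinj),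
    Equiv.ofBijective ρ0 (Finite.injective_iff_bijective.1 hρinj), ?_⟩
  apply Equiv.ext
  rintro ⟨i, j⟩
  have hmem : g (i, j) ∈ row f (σ0 i) ∩ row (swap f) (ρ0 j) := by
    rw [hσ0, hρ0]
    exact Finset.mem_inter.2 ⟨mem_row.2 ⟨j, rfl⟩,
      mem_row.2 ⟨i, (swap_apply g j i)⟩⟩
  rw [row_inter_row_swap, Finset.mem_singleton] at hmem
  exact hmem

lemma toRect_surjective (hd : 0 < d) (he : 0 < e) (hde : d * e = n) :
    Function.Surjective (toRect hd he (n := n)) := by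
  rintro ⟨⟨π, τ⟩, hrect, hdcard⟩
  -- every part of τ has card d, every part of π has card (τ.parts.card)
  have hcard_part : ∀ B ∈ π.parts, B.card = τ.parts.card := by
    intro B hB
    have hB_sub : ∀ x ∈ B, x ∈ (Finset.univ : Finset (Fin n)) := fun x _ => mem_univ x
    -- B = biUnion over τ.parts of (B ∩ C)
    have hdisj : ∀ C ∈ τ.parts, ∀ C' ∈ τ.parts, C ≠ C' →
        Disjoint (B ∩ C) (B ∩ C') := by
      intro C hC C' hC' hne
      exact (τ.disjoint hC hC' hne).mono inter_subset_right inter_subset_right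
    have hBeq : B = τ.parts.biUnion (fun C => B ∩ C) := by
      ext x
      simp only [Finset.mem_biUnion, Finset.mem_inter]
      constructor
      · intro hx
        obtain ⟨C, hC, hxC⟩ := τ.exists_mem (mem_univ x)
        exact ⟨C, hC, hx, hxC⟩
      · rintro ⟨C, hC, hx, -⟩; exact hx
    rw [hBeq, Finset.card_biUnion hdisj]
    rw [Finset.sum_congr rfl (fun C hC => hrect B hB C hC)]
    simp
  have hτcard : τ.parts.card = e := by
    have hsum := π.sum_card_parts
    rw [Finset.sum_congr rfl hcard_part, Finset.sum_const, smul_eq_mul, hdcard,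
      Finset.card_univ, Fintype.card_fin] at hsum
    have : d * τ.parts.card = d * e := by rw [hsum, hde]
    exact Nat.eq_of_mul_eq_mul_left hd this
  -- enumerate parts
  have eπ : Fin d ≃ {B // B ∈ π.parts} := (Finset.equivFinOfCardEq hdcard).symm
  have eτ : Fin e ≃ {C // C ∈ τ.parts} := (Finset.equivFinOfCardEq hτcard).symm
  -- the unique element of (eπ i) ∩ (eτ j)
  have hone : ∀ (i : Fin d) (j : Fin e), ∃ x, (eπ i).1 ∩ (eτ j).1 = {x} := by
    intro i j
    exact Finset.card_eq_one.1 (hrect _ (eπ i).2 _ (eτ j).2)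
  choose F hF using hone
  have hFmem : ∀ i j, F i j ∈ (eπ i).1 ∩ (eτ j).1 := by
    intro i j; rw [hF]; exact Finset.mem_singleton_self _
  have hFinj : Function.Injective (fun p : Fin d × Fin e => F p.1 p.2) := by
    rintro ⟨i, j⟩ ⟨i', j'⟩ hF12
    simp only at hF12
    have h1 := Finset.mem_inter.1 (hFmem i j)
    have h2 := Finset.mem_inter.1 (hFmem i' j')
    have hi : i = i' := by
      apply eπ.injective
      apply Subtype.ext
      by_contra hne
      exact Finset.disjoint_left.1 (π.disjoint (eπ i).2 (eπ i').2 hne)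
        h1.1 (hF12 ▸ h2.1)
    have hj : j = j' := by
      apply eτ.injective
      apply Subtype.ext
      by_contra hne
      exact Finset.disjoint_left.1 (τ.disjoint (eτ j).2 (eτ j').2 hne)
        h1.2 (hF12 ▸ h2.2)
    rw [hi, hj]
  have hcards : Fintype.card (Fin d × Fin e) = Fintype.card (Fin n) := by
    simp [hde]
  have hFbij : Function.Bijective (fun p : Fin d × Fin e => F p.1 p.2) :=
    (Fintype.bijective_iff_injective_and_card _).2 ⟨hFinj, hcards⟩
  set f : Fin d × Fin e ≃ Fin n := Equiv.ofBijective _ hFbij with hfdef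
  have hfapp : ∀ i j, f (i, j) = F i j := fun i j => rfl
  -- rows of f are the parts of π
  have hrow_eq : ∀ i, row f i = (eπ i).1 := by
    intro i
    have hsub : row f i ⊆ (eπ i).1 := by
      intro x hx
      obtain ⟨j, hj⟩ := mem_row.1 hx
      rw [hfapp] at hj
      exact hj ▸ (Finset.mem_inter.1 (hFmem i j)).1
    apply Finset.eq_of_subset_of_card_le hsub
    rw [hcard_part _ (eπ i).2, hτcard]
    rw [row_card]
  have hcol_eq : ∀ j, row (swap f) j = (eτ j).1 := by
    intro j
    have hsub : row (swap f) j ⊆ (eτ j).1 := by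
      intro x hx
      obtain ⟨i, hi⟩ := mem_row.1 hx
      rw [swap_apply, hfapp] at hi
      exact hi ▸ (Finset.mem_inter.1 (hFmem i j)).2
    apply Finset.eq_of_subset_of_card_le hsub
    have hCcard : (eτ j).1.card = d := by
      -- symmetric: card of τ-part equals π.parts.card = d
      have hB_sub : ∀ x ∈ (eτ j).1, x ∈ (Finset.univ : Finset (Fin n)) :=
        fun x _ => mem_univ x
      set C := (eτ j).1 with hCdef
      have hdisj : ∀ B ∈ π.parts, ∀ B' ∈ π.parts, B ≠ B' →
          Disjoint (C ∩ B) (C ∩ B') := by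
        intro B hB B' hB' hne
        exact (π.disjoint hB hB' hne).mono inter_subset_right inter_subset_right
      have hCeq : C = π.parts.biUnion (fun B => C ∩ B) := by
        ext x
        simp only [Finset.mem_biUnion, Finset.mem_inter]
        constructor
        · intro hx
          obtain ⟨B, hB, hxB⟩ := π.exists_mem (mem_univ x)
          exact ⟨B, hB, hx, hxB⟩
        · rintro ⟨B, hB, hx, -⟩; exact hx
      rw [hCeq, Finset.card_biUnion hdisj]
      have hone' : ∀ B ∈ π.parts, (C ∩ B).card = 1 := by
        intro B hB
        rw [Finset.inter_comm]
        exact hrect B hB C (eτ j).2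
      rw [Finset.sum_congr rfl hone', Finset.sum_const, smul_eq_mul, mul_one]
      exact hdcard
    rw [hCcard]
    rw [row_card]
  refine ⟨f, ?_⟩
  apply Subtype.ext
  apply Prod.ext
  · apply Finpartition.ext
    ext B
    simp only [toRect]
    rw [mem_rowPartition_parts _ he]
    constructor
    · rintro ⟨i, rfl⟩; rw [hrow_eq]; exact (eπ i).2
    · intro hB
      exact ⟨eπ.symm ⟨B, hB⟩, by rw [hrow_eq]; simp⟩
  · apply Finpartition.ext
    ext C
    simp only [toRect]
    rw [mem_rowPartition_parts _ hd]
    constructor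
    · rintro ⟨j, rfl⟩; rw [hcol_eq]; exact (eτ j).2
    · intro hC
      exact ⟨eτ.symm ⟨C, hC⟩, by rw [hcol_eq]; simp⟩

/-- For each rectangle, the fiber of `toRect` is equivalent to pairs of
permutations. -/
noncomputable def fiberEquiv (hd : 0 < d) (he : 0 < e) (hde : d * e = n)
    (R : Rect n d) :
    (Equiv.Perm (Fin d) × Equiv.Perm (Fin e)) ≃ {f : Fin d × Fin e ≃ Fin n // toRect hd he f = R} := by
  have hf0 := (toRect_surjective hd he hde R).choose_spec
  set f0 := (toRect_surjective hd he hde R).choose with hf0def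
  refine Equiv.ofBijective
    (fun p => ⟨(p.1.prodCongr p.2).trans f0, by rw [toRect_comp, hf0]⟩) ⟨?_, ?_⟩
  · rintro ⟨σ, ρ⟩ ⟨σ', ρ'⟩ hpq
    have hpq' : ((σ.prodCongr ρ).trans f0) = ((σ'.prodCongr ρ').trans f0) :=
      Subtype.ext_iff.1 hpq
    have hptwise : ∀ (i : Fin d) (j : Fin e),
        f0 (σ i, ρ j) = f0 (σ' i, ρ' j) :=
      fun i j => Equiv.ext_iff.1 hpq' (i, j)
    have hσ : σ = σ' :=
      Equiv.ext fun i => (Prod.ext_iff.1 (f0.injective (hptwise i ⟨0, he⟩))).1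
    have hρ : ρ = ρ' :=
      Equiv.ext fun j => (Prod.ext_iff.1 (f0.injective (hptwise ⟨0, hd⟩ j))).2
    rw [hσ, hρ]
  · rintro ⟨g, hg⟩
    obtain ⟨σ, ρ, hgsr⟩ := exists_perm_of_toRect_eq hd he (hf0.trans hg.symm)
    exact ⟨(σ, ρ), Subtype.ext hgsr.symm⟩

end RectAux

open RectAux in
/-- The number of rectangles `(π, τ)` on an `n`-element set whose height (number of
blocks of `π`) is `d`, for `d ∣ n`, equals `n! / (d! · (n/d)!)`. -/
theorem rectangles_of_height_card (n d : ℕ) (hn : 0 < n) (hd : d ∣ n) :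
    Nat.card {p : Finpartition (Finset.univ : Finset (Fin n)) ×
        Finpartition (Finset.univ : Finset (Fin n)) //
        IsRectangle p.1 p.2 ∧ p.1.parts.card = d} =
      n.factorial / (d.factorial * (n / d).factorial) := by
  set e := n / d with he_def
  have hdpos : 0 < d := Nat.pos_of_dvd_of_pos hd hn
  have hde : d * e = n := Nat.mul_div_cancel' hd
  have hepos : 0 < e := by
    rcases Nat.eq_zero_or_pos e with h | h
    · exfalso; rw [h, mul_zero] at hde; omega
    · exact h
  have key : Nat.card (Fin d × Fin e ≃ Fin n) =
      Nat.card (Rect n d) * (Nat.card (Equiv.Perm (Fin d) × Equiv.Perm (Fin e))) := by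
    have e1 : (Fin d × Fin e ≃ Fin n) ≃
        Σ R : Rect n d, {f : Fin d × Fin e ≃ Fin n // toRect hdpos hepos f = R} :=
      (Equiv.sigmaFiberEquiv (toRect hdpos hepos)).symm
    have e2 : (Σ R : Rect n d, {f : Fin d × Fin e ≃ Fin n // toRect hdpos hepos f = R}) ≃
        Σ _ : Rect n d, (Equiv.Perm (Fin d) × Equiv.Perm (Fin e)) :=
      Equiv.sigmaCongrRight (fun R => (fiberEquiv hdpos hepos hde R).symm)
    have e3 : (Σ _ : Rect n d, (Equiv.Perm (Fin d) × Equiv.Perm (Fin e))) ≃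
        Rect n d × (Equiv.Perm (Fin d) × Equiv.Perm (Fin e)) :=
      Equiv.sigmaEquivProd _ _
    rw [Nat.card_congr (e1.trans (e2.trans e3)), Nat.card_prod]
  have hcardE : Nat.card (Fin d × Fin e ≃ Fin n) = n.factorial := by
    have heq : (Fin d × Fin e) ≃ Fin n :=
      (finProdFinEquiv).trans (finCongr hde)
    rw [Nat.card_congr (Equiv.equivCongr heq (Equiv.refl (Fin n)))]
    rw [Nat.card_eq_fintype_card, Fintype.card_equiv (Equiv.refl _)]
    simp
  have hcardP : Nat.card (Equiv.Perm (Fin d) × Equiv.Perm (Fin e)) =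
      d.factorial * e.factorial := by
    rw [Nat.card_prod, Nat.card_eq_fintype_card, Nat.card_eq_fintype_card]
    simp [Fintype.card_perm]
  rw [hcardE, hcardP] at key
  have hpos : 0 < d.factorial * e.factorial :=
    Nat.mul_pos (Nat.factorial_pos _) (Nat.factorial_pos _)
  exact (Nat.div_eq_of_eq_mul_left hpos key).symm
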